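/- Let Q be a real v×s matrix, let w be a design on v treatments, set V = Qᵀ diag(w)⁻¹ Q and λ = λ_max(V), and let h ∈ ℝ^s with ‖h‖ = 1 and V h = λ h. If hᵀ Qᵀ diag(w)⁻¹ diag(w̃) diag(w)⁻¹ Q h ≤ λ for every w̃ ∈ ℝ^v with w̃_i ≥ 0 and Σ_i w̃_i = 1, then λ_max(Qᵀ diag(w̃)⁻¹ Q) ≥ λ for every design w̃ on v treatments; that is, w is E-optimal. -/

import Mathlib

open Matrix Finset

lemma quad_diag {v s : ℕ} (Q : Matrix (Fin v) (Fin s) ℝ) (d : Fin v → ℝ) (x : Fin s → ℝ) :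
    x ⬝ᵥ ((Qᵀ * Matrix.diagonal d * Q) *ᵥ x) = ∑ i, d i * (Q *ᵥ x) i ^ 2 := by
  rw [← Matrix.mulVec_mulVec, ← Matrix.mulVec_mulVec, Matrix.dotProduct_mulVec,
    Matrix.vecMul_transpose]
  simp only [Matrix.mulVec_diagonal, dotProduct, sq]
  apply Finset.sum_congr rfl; intros; ring

lemma rayleigh_le {n : ℕ} (A : Matrix (Fin n) (Fin n) ℝ) (hA : A.IsHermitian)
    (c : ℝ) (hc : ∀ j, hA.eigenvalues j ≤ c) (x : Fin n → ℝ) :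
    x ⬝ᵥ (A *ᵥ x) ≤ c * (x ⬝ᵥ x) := by
  set U : Matrix (Fin n) (Fin n) ℝ := (hA.eigenvectorUnitary : Matrix (Fin n) (Fin n) ℝ) with hUdef
  have hstar : star U = Uᵀ := by
    rw [Matrix.star_eq_conjTranspose, Matrix.conjTranspose_eq_transpose_of_trivial]
  have hU1 : U * Uᵀ = 1 := by
    rw [← hstar]; exact (Matrix.mem_unitaryGroup_iff).mp hA.eigenvectorUnitary.2
  have hspec : A = U * Matrix.diagonal hA.eigenvalues * Uᵀ := by
    have := hA.spectral_theorem
    rw [← hstar]; simpa using this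
  set y : Fin n → ℝ := Uᵀ *ᵥ x with hy
  have hyy : y ⬝ᵥ y = x ⬝ᵥ x := by
    rw [hy, dotProduct_comm, Matrix.dotProduct_mulVec, Matrix.vecMul_transpose,
      Matrix.mulVec_mulVec, hU1, Matrix.one_mulVec]
  have hform : x ⬝ᵥ (A *ᵥ x) = ∑ j, hA.eigenvalues j * y j ^ 2 := by
    conv_lhs => rw [hspec]
    rw [← Matrix.mulVec_mulVec, ← Matrix.mulVec_mulVec, Matrix.dotProduct_mulVec,
      ← Matrix.mulVec_transpose, ← hy]
    simp only [Matrix.mulVec_diagonal, dotProduct, sq]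
    apply Finset.sum_congr rfl; intros; ring
  rw [hform, ← hyy]
  calc ∑ j, hA.eigenvalues j * y j ^ 2 ≤ ∑ j, c * y j ^ 2 := by
        apply Finset.sum_le_sum
        intro j _
        exact mul_le_mul_of_nonneg_right (hc j) (sq_nonneg _)
    _ = c * (y ⬝ᵥ y) := by rw [← Finset.mul_sum]; simp [dotProduct, sq]

theorem stmt_10 (v s : ℕ) (Q : Matrix (Fin v) (Fin s) ℝ)
    (w : Fin v → ℝ) (hw : ∀ i, 0 < w i) (hw1 : ∑ i, w i = 1)
    (lam : ℝ) (h : Fin s → ℝ) (hnorm : ∑ j, (h j) ^ 2 = 1)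
    (heig : (Qᵀ * (Matrix.diagonal w)⁻¹ * Q) *ᵥ h = lam • h)
    (hlam : IsGreatest {r : ℝ | ∃ x : Fin s → ℝ, x ≠ 0 ∧
        (Qᵀ * (Matrix.diagonal w)⁻¹ * Q) *ᵥ x = r • x} lam)
    (hineq : ∀ wt : Fin v → ℝ, (∀ i, 0 ≤ wt i) → ∑ i, wt i = 1 →
        h ⬝ᵥ ((Qᵀ * (Matrix.diagonal w)⁻¹ * Matrix.diagonal wt *
          (Matrix.diagonal w)⁻¹ * Q) *ᵥ h) ≤ lam) :
    ∀ wt : Fin v → ℝ, (∀ i, 0 < wt i) → ∑ i, wt i = 1 →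
      ∀ lam' : ℝ, IsGreatest {r : ℝ | ∃ x : Fin s → ℝ, x ≠ 0 ∧
          (Qᵀ * (Matrix.diagonal wt)⁻¹ * Q) *ᵥ x = r • x} lam' →
        lam ≤ lam' := by
  intro wt hwt hwt1 lam' hlam'
  have hinv : ∀ u : Fin v → ℝ, (∀ i, 0 < u i) →
      (Matrix.diagonal u)⁻¹ = Matrix.diagonal (fun i => (u i)⁻¹) := by
    intro u hu
    apply Matrix.inv_eq_right_inv
    rw [Matrix.diagonal_mul_diagonal]
    have : (fun i => u i * (u i)⁻¹) = fun _ => (1 : ℝ) :=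
      funext fun i => mul_inv_cancel₀ (hu i).ne'
    rw [this, Matrix.diagonal_one]
  have hdw := hinv w hw
  have hdwt := hinv wt hwt
  set a : Fin v → ℝ := Q *ᵥ h with ha
  have hh1 : h ⬝ᵥ h = 1 := by
    rw [← hnorm]; simp [dotProduct, sq]
  -- lam as a quadratic form
  have hlam_eq : lam = ∑ i, (w i)⁻¹ * a i ^ 2 := by
    have e1 : h ⬝ᵥ ((Qᵀ * (Matrix.diagonal w)⁻¹ * Q) *ᵥ h) = lam := by
      rw [heig, dotProduct_smul, hh1, smul_eq_mul, mul_one]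
    rw [← e1, hdw, quad_diag]
  have hlam_nonneg : 0 ≤ lam := by
    rw [hlam_eq]
    apply Finset.sum_nonneg
    intro i _
    exact mul_nonneg (inv_nonneg.mpr (hw i).le) (sq_nonneg _)
  -- the key inequality applied to wt
  have key2 : ∑ i, wt i * ((w i)⁻¹ * a i) ^ 2 ≤ lam := by
    have hM : Qᵀ * (Matrix.diagonal w)⁻¹ * Matrix.diagonal wt * (Matrix.diagonal w)⁻¹ * Q
        = Qᵀ * Matrix.diagonal (fun i => (w i)⁻¹ * wt i * (w i)⁻¹) * Q := by
      rw [hdw, Matrix.mul_assoc Qᵀ, Matrix.mul_assoc Qᵀ, Matrix.diagonal_mul_diagonal,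
        Matrix.diagonal_mul_diagonal]
    have := hineq wt (fun i => (hwt i).le) hwt1
    rw [hM, quad_diag] at this
    refine le_trans (le_of_eq ?_) this
    apply Finset.sum_congr rfl; intros; ring
  -- the Rayleigh quotient of h for the competitor information matrix
  set R : ℝ := ∑ i, (wt i)⁻¹ * a i ^ 2 with hR
  have hR_nonneg : 0 ≤ R := by
    apply Finset.sum_nonneg
    intro i _
    exact mul_nonneg (inv_nonneg.mpr (hwt i).le) (sq_nonneg _)
  -- Cauchy–Schwarz : lam^2 ≤ R * lam
  have hCS : lam ^ 2 ≤ R * lam := by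
    have hcs := Finset.sum_mul_sq_le_sq_mul_sq Finset.univ
      (fun i => a i / Real.sqrt (wt i)) (fun i => Real.sqrt (wt i) * ((w i)⁻¹ * a i))
    have e2 : ∑ i, (a i / Real.sqrt (wt i)) * (Real.sqrt (wt i) * ((w i)⁻¹ * a i)) = lam := by
      rw [hlam_eq]
      apply Finset.sum_congr rfl
      intro i _
      have hs : Real.sqrt (wt i) ≠ 0 := ne_of_gt (Real.sqrt_pos.mpr (hwt i))
      have : a i / Real.sqrt (wt i) * (Real.sqrt (wt i) * ((w i)⁻¹ * a i))
          = Real.sqrt (wt i) / Real.sqrt (wt i) * ((w i)⁻¹ * a i ^ 2) := by ring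
      rw [this, div_self hs, one_mul]
    have e3 : ∑ i, (a i / Real.sqrt (wt i)) ^ 2 = R := by
      apply Finset.sum_congr rfl
      intro i _
      rw [div_pow, Real.sq_sqrt (hwt i).le]
      field_simp
    have e4 : ∑ i, (Real.sqrt (wt i) * ((w i)⁻¹ * a i)) ^ 2
        = ∑ i, wt i * ((w i)⁻¹ * a i) ^ 2 := by
      apply Finset.sum_congr rfl
      intro i _
      rw [mul_pow, Real.sq_sqrt (hwt i).le]
    rw [e2, e3, e4] at hcs
    calc lam ^ 2 ≤ R * ∑ i, wt i * ((w i)⁻¹ * a i) ^ 2 := hcs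
      _ ≤ R * lam := by
          exact mul_le_mul_of_nonneg_left key2 hR_nonneg
  -- the competitor information matrix is Hermitian
  have hherm : (Qᵀ * (Matrix.diagonal wt)⁻¹ * Q).IsHermitian := by
    rw [hdwt]
    have hd : (Matrix.diagonal (fun i => (wt i)⁻¹) : Matrix (Fin v) (Fin v) ℝ).IsHermitian :=
      Matrix.isHermitian_diagonal _
    have := Matrix.isHermitian_conjTranspose_mul_mul Q hd
    simpa [Matrix.conjTranspose_eq_transpose_of_trivial] using this
  -- every eigenvalue of it is at most lam'
  have hev : ∀ j, hherm.eigenvalues j ≤ lam' := by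
    intro j
    apply hlam'.2
    refine ⟨⇑(hherm.eigenvectorBasis j), ?_, ?_⟩
    · have hb := hherm.eigenvectorBasis.orthonormal.ne_zero j
      intro hcontra
      exact hb (by ext k; exact congrFun hcontra k)
    · rw [hherm.mulVec_eigenvectorBasis]
  -- Rayleigh bound : R ≤ lam'
  have hRlam' : R ≤ lam' := by
    have := rayleigh_le _ hherm lam' hev h
    rw [hh1, mul_one] at this
    refine le_trans (le_of_eq ?_) this
    rw [hdwt, quad_diag]
  -- nonnegativity of lam' (needed when lam = 0)
  have hlam'_nonneg : 0 ≤ lam' := by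
    obtain ⟨x, hx0, hxe⟩ := hlam'.1
    have hq : x ⬝ᵥ ((Qᵀ * (Matrix.diagonal wt)⁻¹ * Q) *ᵥ x) = lam' * (x ⬝ᵥ x) := by
      rw [hxe, dotProduct_smul, smul_eq_mul]
    have hq0 : 0 ≤ x ⬝ᵥ ((Qᵀ * (Matrix.diagonal wt)⁻¹ * Q) *ᵥ x) := by
      rw [hdwt, quad_diag]
      apply Finset.sum_nonneg
      intro i _
      exact mul_nonneg (inv_nonneg.mpr (hwt i).le) (sq_nonneg _)
    have hxx : 0 < x ⬝ᵥ x := by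
      have hnn : 0 ≤ x ⬝ᵥ x := Finset.sum_nonneg fun j _ => mul_self_nonneg (x j)
      rcases lt_or_eq_of_le hnn with hp | he
      · exact hp
      · exact absurd ((dotProduct_self_eq_zero).mp he.symm) hx0
    nlinarith
  rcases eq_or_lt_of_le hlam_nonneg with h0 | hpos
  · rw [← h0]; exact hlam'_nonneg
  · have hlamR : lam ≤ R := by
      have := hCS
      nlinarith
    exact le_trans hlamR hRlam'
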